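/- Let (K, D) be a model of W_e-DCF. Then the kernel of D_{𝐞_1} equals K^p, the subfield of p-th powers of K. -/

import Mathlib

noncomputable section

open scoped BigOperators

/-- The `m`-th Witt addition polynomial with coefficients reduced mod `p`. -/
def wittHmod (p : ℕ) [Fact p.Prime] (m : ℕ) : MvPolynomial (Fin 2 × ℕ) (ZMod p) :=
  MvPolynomial.map (Int.castRingHom (ZMod p)) (WittVector.wittAdd p m)

/-- The exponent (as a finitely supported function) of the monomial `X̄^i * Ȳ^j`,
where `X_{m+1}` is the variable `(0, m)` and `Y_{m+1}` is the variable `(1, m)`. -/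
def xyExp (e : ℕ) (i j : Fin e → ℕ) : (Fin 2 × ℕ) →₀ ℕ :=
  ∑ m : Fin e, (Finsupp.single ((0 : Fin 2), (m : ℕ)) (i m) +
    Finsupp.single ((1 : Fin 2), (m : ℕ)) (j m))

/-- `wittAlpha p e i j l` is the coefficient `α_{i,j}(l) ∈ 𝔽_p` of the monomial `X̄^i * Ȳ^j` in
`H_1^{l_1} ⋯ H_e^{l_e}`, where `H_1, …, H_e` are the polynomials giving the group law of the
`e`-dimensional Witt group over `𝔽_p`. -/
def wittAlpha (p : ℕ) [Fact p.Prime] (e : ℕ) (i j l : Fin e → ℕ) : ZMod p :=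
  MvPolynomial.coeff (xyExp e i j) (∏ m : Fin e, (wittHmod p (m : ℕ)) ^ (l m))

/-- `(K, D)` is a model of `W_e`-DCF:  `K` is a separably closed field of characteristic `p` with
`[K : K^p] = p^e` (where `K^p` is the subfield of `p`-th powers, i.e. the range of the Frobenius)
and `D` is a strict `W_e`-iterative Hasse–Schmidt derivation of dimension `e`.  Multi-indices
`𝐢 ∈ ℕ^e` are represented as functions `Fin e → ℕ`, and the scalars `α_{𝐢,𝐣}(𝐥) ∈ 𝔽_p` act on `K`
via `ZMod.cast` (the iterated sum of `1`). -/
def IsWeDCF (p e : ℕ) [Fact p.Prime] (K : Type*) [Field K] [CharP K p]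
    (D : (Fin e → ℕ) → K → K) : Prop :=
  IsSepClosed K ∧
  Module.finrank ↥(RingHom.fieldRange (frobenius K p)) K = p ^ e ∧
  D 0 = id ∧
  (∀ i : Fin e → ℕ, ∀ x y : K, D i (x + y) = D i x + D i y) ∧
  (∀ i : Fin e → ℕ, ∀ x y : K, D i (x * y) =
     ∑ k ∈ Finset.Iic i, D k x * D (i - k) y) ∧
  (∀ i j : Fin e → ℕ, ∀ x : K,
     D i (D j x) = ∑ᶠ l : Fin e → ℕ, ZMod.cast (wittAlpha p e i j l) * D l x) ∧
  (∀ x : K, (∀ m : Fin e, D (Pi.single m 1) x = 0) ↔ ∃ y : K, x = y ^ p)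


open MvPolynomial Finsupp

set_option linter.unusedSectionVars false

section WH
variable {σ τ R : Type*} [CommRing R]

lemma whPow {w : σ → ℕ} {φ : MvPolynomial σ R} {m : ℕ} (h : φ.IsWeightedHomogeneous w m)
    (k : ℕ) : (φ ^ k).IsWeightedHomogeneous w (k * m) := by
  have := MvPolynomial.IsWeightedHomogeneous.prod (Finset.range k) (fun _ => φ) (fun _ => m)
    (w := w) (fun i _ => h)
  simpa using this

lemma whSub {w : σ → ℕ} {a b : MvPolynomial σ R} {m : ℕ} (h1 : a.IsWeightedHomogeneous w m)
    (h2 : b.IsWeightedHomogeneous w m) : (a - b).IsWeightedHomogeneous w m := by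
  intro d hd
  rw [MvPolynomial.coeff_sub] at hd
  by_cases h : MvPolynomial.coeff d a ≠ 0
  · exact h1 h
  · exact h2 (by rw [not_not] at h; intro h'; apply hd; rw [h, h', sub_zero])

lemma whBind₁ (w₁ : σ → ℕ) (w₂ : τ → ℕ) (φ : MvPolynomial σ R) (n : ℕ)
    (g : σ → MvPolynomial τ R) (hφ : φ.IsWeightedHomogeneous w₁ n)
    (hg : ∀ i, (g i).IsWeightedHomogeneous w₂ (w₁ i)) :
    (MvPolynomial.bind₁ g φ).IsWeightedHomogeneous w₂ n := by
  conv_lhs => rw [φ.as_sum]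
  rw [map_sum]
  refine MvPolynomial.IsWeightedHomogeneous.sum _ _ _ (fun d hd => ?_)
  rw [bind₁_monomial]
  have h1 : (MvPolynomial.C (coeff d φ) : MvPolynomial τ R).IsWeightedHomogeneous w₂ 0 :=
    isWeightedHomogeneous_C _ _
  have h2 := MvPolynomial.IsWeightedHomogeneous.prod d.support (fun i => g i ^ d i)
    (fun i => d i * w₁ i) (w := w₂) (fun i _ => whPow (hg i) (d i))
  have := h1.mul h2
  rw [zero_add] at this
  convert this using 1
  rw [← hφ (MvPolynomial.mem_support_iff.mp hd)]
  rw [weight_apply, Finsupp.sum]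
  simp [smul_eq_mul]
end WH

section Witt
variable (p : ℕ) [hp : Fact p.Prime]

lemma wh_xInTermsOfW (n : ℕ) :
    (xInTermsOfW p ℚ n).IsWeightedHomogeneous (fun i => p ^ i) (p ^ n) := by
  induction n using Nat.strong_induction_on with
  | _ n ih =>
    rw [xInTermsOfW_eq]
    have h1 : (MvPolynomial.X n - ∑ i ∈ Finset.range n,
        MvPolynomial.C ((p:ℚ) ^ i) * xInTermsOfW p ℚ i ^ p ^ (n - i)).IsWeightedHomogeneous
        (fun i => p ^ i) (p ^ n) := by
      refine whSub (isWeightedHomogeneous_X ℚ _ n) ?_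
      refine MvPolynomial.IsWeightedHomogeneous.sum _ _ _ (fun i hi => ?_)
      have := (isWeightedHomogeneous_C (R := ℚ) (fun i : ℕ => p ^ i) ((p:ℚ)^i)).mul
        (whPow (ih i (Finset.mem_range.mp hi)) (p ^ (n-i)))
      rw [zero_add] at this
      have h2 : (p:ℕ) ^ n = p ^ (n-i) * p ^ i := by
        rw [← pow_add]
        congr 1
        have := Finset.mem_range.mp hi; omega
      rw [h2]
      exact this
    have := h1.mul (isWeightedHomogeneous_C (fun i : ℕ => p ^ i) ((⅟(p:ℚ)) ^ n))
    rwa [add_zero] at this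

lemma wh_renameW (b : Fin 2) (k : ℕ) :
    ((MvPolynomial.rename (Prod.mk b) (wittPolynomial p ℚ k))).IsWeightedHomogeneous
      (fun v : Fin 2 × ℕ => p ^ v.2) (p ^ k) := by
  rw [wittPolynomial, map_sum]
  refine MvPolynomial.IsWeightedHomogeneous.sum _ _ _ (fun i hi => ?_)
  rw [rename_monomial]
  refine isWeightedHomogeneous_monomial _ _ _ ?_
  rw [Finsupp.mapDomain_single, weight_apply, Finsupp.sum_single_index]
  · simp only [smul_eq_mul]
    rw [← pow_add]
    congr 1
    have := Finset.mem_range.mp hi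
    omega
  · simp

lemma wh_wittHmod (k : ℕ) :
    (wittHmod p k).IsWeightedHomogeneous (fun v : Fin 2 × ℕ => p ^ v.2) (p ^ k) := by
  have hrat : (wittStructureRat p (MvPolynomial.map (Int.castRingHom ℚ)
      (MvPolynomial.X 0 + MvPolynomial.X 1 : MvPolynomial (Fin 2) ℤ)) k).IsWeightedHomogeneous
      (fun v : Fin 2 × ℕ => p ^ v.2) (p ^ k) := by
    unfold wittStructureRat
    refine whBind₁ (fun i => p ^ i) _ _ _ _ (wh_xInTermsOfW p k) (fun i => ?_)
    simp only [map_add, MvPolynomial.map_X, bind₁_X_right]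
    exact (wh_renameW p 0 i).add (wh_renameW p 1 i)
  intro d hd
  have hz : MvPolynomial.coeff d (WittVector.wittAdd p k) ≠ 0 := by
    intro h
    apply hd
    rw [wittHmod, MvPolynomial.coeff_map, h]
    simp
  have hq : MvPolynomial.coeff d (wittStructureRat p (MvPolynomial.map (Int.castRingHom ℚ)
      (MvPolynomial.X 0 + MvPolynomial.X 1 : MvPolynomial (Fin 2) ℤ)) k) ≠ 0 := by
    rw [← map_wittStructureInt, MvPolynomial.coeff_map]
    simp
    exact hz
  exact hrat hq

end Witt

section Shift
variable (p : ℕ) [hp : Fact p.Prime]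

/-- kill level-0 variables and shift the others down by one -/
def shiftHom (m : ℕ) : MvPolynomial (Fin 2 × ℕ) (ZMod p) →ₐ[ZMod p]
    MvPolynomial (Fin 2 × ℕ) (ZMod p) :=
  MvPolynomial.aeval (fun v : Fin 2 × ℕ =>
    if v.2 < m then 0 else MvPolynomial.X (v.1, v.2 - m))

lemma aeval_int_eq (q : MvPolynomial (Fin 2 × ℕ) ℤ)
    (u : Fin 2 × ℕ → MvPolynomial (Fin 2 × ℕ) (ZMod p)) :
    MvPolynomial.aeval u (MvPolynomial.map (Int.castRingHom (ZMod p)) q)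
      = MvPolynomial.aeval u q := by
  have h : (algebraMap (ZMod p) (MvPolynomial (Fin 2 × ℕ) (ZMod p))).comp
      (Int.castRingHom (ZMod p)) = algebraMap ℤ (MvPolynomial (Fin 2 × ℕ) (ZMod p)) :=
    Subsingleton.elim _ _
  rw [MvPolynomial.aeval_def, MvPolynomial.aeval_def, MvPolynomial.eval₂_map, h]

lemma shift_one_wittHmod_succ (k : ℕ) :
    shiftHom p 1 (wittHmod p (k+1)) = wittHmod p k := by
  classical
  set R := MvPolynomial (Fin 2 × ℕ) (ZMod p)
  set x : WittVector p R := WittVector.mk p (fun i => MvPolynomial.X (0, i)) with hx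
  set y : WittVector p R := WittVector.mk p (fun i => MvPolynomial.X (1, i)) with hy
  have hV : (WittVector.verschiebung (x + y)).coeff (k+1)
      = (WittVector.verschiebung x + WittVector.verschiebung y).coeff (k+1) := by
    rw [map_add]
  rw [WittVector.verschiebung_coeff_succ, WittVector.add_coeff, WittVector.add_coeff] at hV
  unfold WittVector.peval at hV
  have hu0 : (Function.uncurry ![x.coeff, y.coeff]) = fun v : Fin 2 × ℕ => (MvPolynomial.X v : R) := by
    funext v
    obtain ⟨b, i⟩ := v
    fin_cases b <;> simp [hx, hy, Function.uncurry, WittVector.coeff_mk]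
  have hu1 : (Function.uncurry ![(WittVector.verschiebung x).coeff,
      (WittVector.verschiebung y).coeff]) = fun v : Fin 2 × ℕ =>
        if v.2 < 1 then 0 else (MvPolynomial.X (v.1, v.2 - 1) : R) := by
    funext v
    obtain ⟨b, i⟩ := v
    fin_cases b <;> rcases i with _ | i <;>
      simp [hx, hy, Function.uncurry, WittVector.verschiebung_coeff_zero,
        WittVector.verschiebung_coeff_succ, WittVector.coeff_mk]
  rw [hu0, hu1] at hV
  have e1 : shiftHom p 1 (wittHmod p (k+1))
      = MvPolynomial.aeval (fun v : Fin 2 × ℕ =>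
          if v.2 < 1 then 0 else (MvPolynomial.X (v.1, v.2 - 1) : R)) (WittVector.wittAdd p (k+1)) := by
    rw [shiftHom, wittHmod, aeval_int_eq]
  have e2 : wittHmod p k
      = MvPolynomial.aeval (fun v : Fin 2 × ℕ => (MvPolynomial.X v : R)) (WittVector.wittAdd p k) := by
    rw [wittHmod, ← aeval_int_eq, MvPolynomial.aeval_X_left_apply]
  rw [e1, e2]
  exact hV.symm

lemma shift_one_wittHmod_zero : shiftHom p 1 (wittHmod p 0) = 0 := by
  have : wittHmod p 0 = MvPolynomial.X (0,0) + MvPolynomial.X (1,0) := by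
    rw [wittHmod, WittVector.wittAdd_zero]
    simp
  rw [this, map_add, shiftHom]
  simp

lemma shiftHom_succ_apply (m : ℕ) (q : MvPolynomial (Fin 2 × ℕ) (ZMod p)) :
    shiftHom p (m+1) q = shiftHom p m (shiftHom p 1 q) := by
  have : (shiftHom p m).comp (shiftHom p 1) = shiftHom p (m+1) := by
    rw [shiftHom, shiftHom, shiftHom, MvPolynomial.comp_aeval]
    congr 1
    funext v
    obtain ⟨b, i⟩ := v
    rcases i with _ | i
    · simp
    · simp only [Nat.succ_sub_one]
      rw [if_neg (by omega), MvPolynomial.aeval_X]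
      by_cases h : i < m
      · rw [if_pos h, if_pos (by omega)]
      · rw [if_neg h, if_neg (by omega)]
        congr 2
        omega
  rw [← this]
  rfl

lemma shiftHom_wittHmod (m k : ℕ) :
    shiftHom p m (wittHmod p k) = if k < m then 0 else wittHmod p (k - m) := by
  induction m generalizing k with
  | zero =>
    rw [if_neg (by omega), Nat.sub_zero]
    have h0 : (fun v : Fin 2 × ℕ => if v.2 < 0 then (0 : MvPolynomial (Fin 2 × ℕ) (ZMod p))
        else MvPolynomial.X (v.1, v.2 - 0)) = MvPolynomial.X := by
      funext v
      simp
    rw [shiftHom, h0, MvPolynomial.aeval_X_left_apply]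
  | succ m ih =>
    rw [shiftHom_succ_apply]
    rcases k with _ | k
    · rw [shift_one_wittHmod_zero, map_zero, if_pos (by omega)]
    · rw [shift_one_wittHmod_succ, ih]
      by_cases h : k < m
      · rw [if_pos h, if_pos (by omega)]
      · rw [if_neg h, if_neg (by omega)]
        congr 1
        omega

end Shift

section Kill
variable (p : ℕ) [hp : Fact p.Prime]

def killLow (m : ℕ) : MvPolynomial (Fin 2 × ℕ) (ZMod p) →ₐ[ZMod p]
    MvPolynomial (Fin 2 × ℕ) (ZMod p) :=
  MvPolynomial.aeval (fun v : Fin 2 × ℕ => if v.2 < m then 0 else MvPolynomial.X v)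

lemma killLow_coeff (m : ℕ) (μ : (Fin 2 × ℕ) →₀ ℕ) (h : ∀ v ∈ μ.support, ¬ v.2 < m)
    (P : MvPolynomial (Fin 2 × ℕ) (ZMod p)) :
    MvPolynomial.coeff μ (killLow p m P) = MvPolynomial.coeff μ P := by
  classical
  conv_lhs => rw [P.as_sum]
  conv_rhs => rw [P.as_sum]
  rw [map_sum, MvPolynomial.coeff_sum, MvPolynomial.coeff_sum]
  refine Finset.sum_congr rfl (fun d hd => ?_)
  by_cases hlow : ∃ v ∈ d.support, v.2 < m
  · obtain ⟨v₀, hv0, hv0m⟩ := hlow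
    have hz : killLow p m (MvPolynomial.monomial d (MvPolynomial.coeff d P)) = 0 := by
      rw [killLow, MvPolynomial.aeval_monomial]
      have hzz : (Finsupp.prod d fun v k =>
          (if v.2 < m then (0 : MvPolynomial (Fin 2 × ℕ) (ZMod p)) else MvPolynomial.X v) ^ k)
          = 0 := by
        apply Finset.prod_eq_zero hv0
        show (if v₀.2 < m then (0 : MvPolynomial (Fin 2 × ℕ) (ZMod p))
          else MvPolynomial.X v₀) ^ d v₀ = 0
        rw [if_pos hv0m, zero_pow (Finsupp.mem_support_iff.mp hv0)]
      rw [hzz, mul_zero]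
    rw [hz, MvPolynomial.coeff_zero, MvPolynomial.coeff_monomial, if_neg]
    intro hdμ
    exact (h v₀ (hdμ ▸ hv0)) hv0m
  · push_neg at hlow
    have hk : killLow p m (MvPolynomial.monomial d (MvPolynomial.coeff d P))
        = MvPolynomial.monomial d (MvPolynomial.coeff d P) := by
      rw [killLow, MvPolynomial.aeval_monomial, MvPolynomial.monomial_eq]
      congr 1
      apply Finsupp.prod_congr
      intro v hv
      rw [if_neg (Nat.not_lt.mpr (hlow v hv))]
    rw [hk]

lemma rename_shiftHom (m : ℕ) (P : MvPolynomial (Fin 2 × ℕ) (ZMod p)) :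
    MvPolynomial.rename (fun v : Fin 2 × ℕ => (v.1, v.2 + m)) (shiftHom p m P)
      = killLow p m P := by
  have h : (MvPolynomial.rename (R := ZMod p) (fun v : Fin 2 × ℕ => (v.1, v.2 + m))).comp
      (shiftHom p m) = killLow p m := by
    rw [shiftHom, killLow, MvPolynomial.comp_aeval]
    congr 1
    funext v
    by_cases h : v.2 < m
    · simp [h]
    · rw [if_neg h, if_neg h, MvPolynomial.rename_X]
      congr 2
      omega
  rw [← h]
  rfl

lemma upInj (m : ℕ) : Function.Injective (fun v : Fin 2 × ℕ => (v.1, v.2 + m)) := by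
  intro a b hab
  simp only [Prod.mk.injEq] at hab
  obtain ⟨h1, h2⟩ := hab
  exact Prod.ext h1 (by omega)

lemma coeff_shiftHom (m : ℕ) (ν : (Fin 2 × ℕ) →₀ ℕ) (P : MvPolynomial (Fin 2 × ℕ) (ZMod p)) :
    MvPolynomial.coeff ν (shiftHom p m P)
      = MvPolynomial.coeff (Finsupp.mapDomain (fun v : Fin 2 × ℕ => (v.1, v.2 + m)) ν) P := by
  classical
  rw [← MvPolynomial.coeff_rename_mapDomain _ (upInj m) (shiftHom p m P) ν, rename_shiftHom]
  apply killLow_coeff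
  intro v hv
  have := Finsupp.mapDomain_support hv
  simp only [Finset.mem_image] at this
  obtain ⟨w, _, hw⟩ := this
  subst hw
  omega

end Kill

section Coeffs

def muXY (a b : ℕ) : (Fin 2 × ℕ) →₀ ℕ :=
  Finsupp.single ((0 : Fin 2), 0) a + Finsupp.single ((1 : Fin 2), 0) b

lemma muXY_apply₀ (a b : ℕ) : muXY a b ((0 : Fin 2), 0) = a := by
  rw [muXY]
  simp [Finsupp.single_apply, Prod.ext_iff, (by decide : ¬((1:Fin 2) = 0))]

lemma muXY_apply₁ (a b : ℕ) : muXY a b ((1 : Fin 2), 0) = b := by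
  rw [muXY]
  simp [Finsupp.single_apply, Prod.ext_iff, (by decide : ¬((0:Fin 2) = 1))]

lemma single_pair_eq_muXY_iff (k l a b : ℕ) :
    Finsupp.single ((0:Fin 2), 0) k + Finsupp.single ((1:Fin 2), 0) l = muXY a b
      ↔ (k = a ∧ l = b) := by
  constructor
  · intro h
    rw [muXY] at h
    have h0 := DFunLike.congr_fun h ((0:Fin 2), 0)
    have h1 := DFunLike.congr_fun h ((1:Fin 2), 0)
    simp only [Finsupp.add_apply, Finsupp.single_apply, Prod.ext_iff] at h0 h1
    norm_num at h0 h1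
    exact ⟨h0, h1⟩
  · rintro ⟨rfl, rfl⟩
    rfl

variable {R : Type*} [CommRing R]

lemma coeff_pair_pow (a b s : ℕ) :
    MvPolynomial.coeff (muXY a b)
      ((MvPolynomial.X ((0:Fin 2), 0) + MvPolynomial.X ((1:Fin 2), 0) : MvPolynomial (Fin 2 × ℕ) R) ^ s)
      = if a + b = s then (Nat.choose s a : R) else 0 := by
  classical
  rw [add_pow]
  rw [MvPolynomial.coeff_sum]
  have hterm : ∀ k ∈ Finset.range (s+1),
      MvPolynomial.coeff (muXY a b)
        ((MvPolynomial.X ((0:Fin 2), 0) : MvPolynomial (Fin 2 × ℕ) R) ^ k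
          * MvPolynomial.X ((1:Fin 2), 0) ^ (s - k) * (Nat.choose s k : MvPolynomial (Fin 2 × ℕ) R))
      = if (k = a ∧ s - k = b) then (Nat.choose s k : R) else 0 := by
    intro k _
    have hc : (Nat.choose s k : MvPolynomial (Fin 2 × ℕ) R)
        = MvPolynomial.C (Nat.choose s k : R) := by
      rw [map_natCast (MvPolynomial.C : R →+* MvPolynomial (Fin 2 × ℕ) R)]
    rw [hc, mul_comm _ (MvPolynomial.C ((Nat.choose s k : R))), MvPolynomial.coeff_C_mul,
      MvPolynomial.X_pow_eq_monomial, MvPolynomial.X_pow_eq_monomial,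
      MvPolynomial.monomial_mul, MvPolynomial.coeff_monomial, mul_one]
    by_cases h : Finsupp.single ((0:Fin 2), 0) k + Finsupp.single ((1:Fin 2), 0) (s-k) = muXY a b
    · rw [if_pos h, if_pos ((single_pair_eq_muXY_iff _ _ _ _).mp h)]
      rw [mul_one]
    · rw [if_neg h, if_neg (fun hc' => h ((single_pair_eq_muXY_iff _ _ _ _).mpr hc'))]
      rw [mul_zero]
  rw [Finset.sum_congr rfl hterm]
  by_cases hab : a + b = s
  · rw [if_pos hab]
    rw [Finset.sum_eq_single a]
    · rw [if_pos ⟨rfl, by omega⟩]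
    · intro k _ hk
      rw [if_neg (fun hc => hk hc.1)]
    · intro ha
      exact absurd (Finset.mem_range.mpr (by omega)) ha
  · rw [if_neg hab]
    apply Finset.sum_eq_zero
    intro k hk
    rw [if_neg]
    rintro ⟨rfl, rfl⟩
    have := Finset.mem_range.mp hk
    omega

end Coeffs

section H1
variable (p : ℕ) [hp : Fact p.Prime]
open MvPolynomial

lemma wsr_zero :
    wittStructureRat p (MvPolynomial.map (Int.castRingHom ℚ)
      (MvPolynomial.X 0 + MvPolynomial.X 1 : MvPolynomial (Fin 2) ℤ)) 0
      = MvPolynomial.X ((0:Fin 2),0) + MvPolynomial.X ((1:Fin 2),0) := by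
  unfold wittStructureRat
  rw [xInTermsOfW_zero, bind₁_X_right]
  simp only [map_add, MvPolynomial.map_X, bind₁_X_right, wittPolynomial_zero, rename_X]

lemma coeff_wsr_one :
    MvPolynomial.coeff (muXY (p-1) 1) (wittStructureRat p (MvPolynomial.map (Int.castRingHom ℚ)
      (MvPolynomial.X 0 + MvPolynomial.X 1 : MvPolynomial (Fin 2) ℤ)) 1) = -1 := by
  have hp2 : 2 ≤ p := hp.1.two_le
  rw [wittStructureRat_rec, MvPolynomial.coeff_C_mul]
  rw [Finset.range_one, Finset.sum_singleton, pow_zero, MvPolynomial.C_1, one_mul, wsr_zero]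
  have hA : (MvPolynomial.coeff (muXY (p-1) 1)
      ((bind₁ (fun b : Fin 2 => rename (fun i => (b, i)) (wittPolynomial p ℚ 1)))
        (MvPolynomial.map (Int.castRingHom ℚ)
          (MvPolynomial.X 0 + MvPolynomial.X 1 : MvPolynomial (Fin 2) ℤ)))) = 0 := by
    simp only [map_add, MvPolynomial.map_X, bind₁_X_right, wittPolynomial_one, map_mul,
      rename_C, rename_X, map_pow]
    rw [MvPolynomial.coeff_add, MvPolynomial.coeff_add, MvPolynomial.coeff_add,
      MvPolynomial.coeff_C_mul, MvPolynomial.coeff_C_mul]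
    have k1 : MvPolynomial.coeff (muXY (p-1) 1) (MvPolynomial.X ((0:Fin 2), 1) : MvPolynomial (Fin 2 × ℕ) ℚ) = 0 := by
      rw [MvPolynomial.coeff_X', if_neg]
      intro h
      have := DFunLike.congr_fun h ((1:Fin 2), 0)
      rw [muXY_apply₁] at this
      simp [Finsupp.single_apply, Prod.ext_iff] at this
    have k2 : MvPolynomial.coeff (muXY (p-1) 1) (MvPolynomial.X ((1:Fin 2), 1) : MvPolynomial (Fin 2 × ℕ) ℚ) = 0 := by
      rw [MvPolynomial.coeff_X', if_neg]
      intro h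
      have := DFunLike.congr_fun h ((1:Fin 2), 0)
      rw [muXY_apply₁] at this
      simp [Finsupp.single_apply, Prod.ext_iff] at this
    have k3 : MvPolynomial.coeff (muXY (p-1) 1) ((MvPolynomial.X ((0:Fin 2), 0) : MvPolynomial (Fin 2 × ℕ) ℚ) ^ p) = 0 := by
      rw [MvPolynomial.X_pow_eq_monomial, MvPolynomial.coeff_monomial, if_neg]
      intro h
      have := DFunLike.congr_fun h ((1:Fin 2), 0)
      rw [muXY_apply₁] at this
      simp [Finsupp.single_apply, Prod.ext_iff] at this
    have k4 : MvPolynomial.coeff (muXY (p-1) 1) ((MvPolynomial.X ((1:Fin 2), 0) : MvPolynomial (Fin 2 × ℕ) ℚ) ^ p) = 0 := by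
      rw [MvPolynomial.X_pow_eq_monomial, MvPolynomial.coeff_monomial, if_neg]
      intro h
      have := DFunLike.congr_fun h ((0:Fin 2), 0)
      rw [muXY_apply₀] at this
      rw [Finsupp.single_apply, if_neg (by simp [Prod.ext_iff])] at this
      omega
    rw [k1, k2, k3, k4]
    ring
  rw [MvPolynomial.coeff_sub, hA]
  rw [Nat.sub_zero, pow_one, pow_one, coeff_pair_pow, if_pos (by omega)]
  have hch : Nat.choose p (p-1) = p := by
    have h1 : Nat.choose p (p - 1) = Nat.choose p 1 := by
      have := Nat.choose_symm (n := p) (k := 1) (by omega)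
      simpa using this
    rw [h1, Nat.choose_one_right]
  rw [hch]
  rw [zero_sub]
  field_simp

lemma coeff_wittHmod_one :
    MvPolynomial.coeff (muXY (p-1) 1) (wittHmod p 1) = -1 := by
  have hint : MvPolynomial.coeff (muXY (p-1) 1) (WittVector.wittAdd p 1) = -1 := by
    have h := coeff_wsr_one p
    rw [← map_wittStructureInt, MvPolynomial.coeff_map] at h
    have : WittVector.wittAdd p 1 = wittStructureInt p
        (MvPolynomial.X 0 + MvPolynomial.X 1 : MvPolynomial (Fin 2) ℤ) 1 := rfl
    rw [this]
    have h2 : ((MvPolynomial.coeff (muXY (p-1) 1) (wittStructureInt p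
        (MvPolynomial.X 0 + MvPolynomial.X 1 : MvPolynomial (Fin 2) ℤ) 1) : ℤ) : ℚ) = -1 := h
    exact_mod_cast h2
  rw [wittHmod, MvPolynomial.coeff_map, hint]
  simp

end H1

section Classification
variable (p : ℕ) [hp : Fact p.Prime]

lemma wittHmod_zero_eq : wittHmod p 0
    = MvPolynomial.X ((0:Fin 2),0) + MvPolynomial.X ((1:Fin 2),0) := by
  rw [wittHmod, WittVector.wittAdd_zero]
  simp

lemma xyExp_single (e : ℕ) (m : Fin e) (n : ℕ) :
    xyExp e (Pi.single m n) (Pi.single m 1)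
      = Finsupp.mapDomain (fun v : Fin 2 × ℕ => (v.1, v.2 + m.val)) (muXY n 1) := by
  classical
  rw [xyExp, muXY, Finsupp.mapDomain_add, Finsupp.mapDomain_single, Finsupp.mapDomain_single]
  rw [Finset.sum_eq_single m]
  · rw [Pi.single_eq_same, Pi.single_eq_same]
    simp
  · intro k _ hk
    rw [Pi.single_eq_of_ne hk, Pi.single_eq_of_ne hk]
    simp
  · intro h
    exact absurd (Finset.mem_univ m) h

lemma wittAlpha_eq_coeff (e : ℕ) (m : Fin e) (n : ℕ) (l : Fin e → ℕ) :
    wittAlpha p e (Pi.single m n) (Pi.single m 1) l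
      = MvPolynomial.coeff (muXY n 1)
          (∏ k : Fin e, (shiftHom p m.val) (wittHmod p (k : ℕ) ^ l k)) := by
  rw [wittAlpha, xyExp_single, ← coeff_shiftHom, map_prod]

lemma wittAlpha_single (e : ℕ) (m : Fin e) (n : ℕ) :
    wittAlpha p e (Pi.single m n) (Pi.single m 1) (Pi.single m (n+1))
      = ((n+1 : ℕ) : ZMod p) := by
  classical
  rw [wittAlpha_eq_coeff]
  rw [Finset.prod_eq_single m]
  · rw [Pi.single_eq_same, map_pow, shiftHom_wittHmod, if_neg (lt_irrefl _), Nat.sub_self,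
      wittHmod_zero_eq, coeff_pair_pow, if_pos rfl, Nat.choose_succ_self_right]
  · intro k _ hk
    rw [Pi.single_eq_of_ne hk, pow_zero, map_one]
  · intro h
    exact absurd (Finset.mem_univ m) h

lemma wittAlpha_next (e : ℕ) (m : Fin e) (h : m.val + 1 < e) :
    wittAlpha p e (Pi.single m (p-1)) (Pi.single m 1)
      (Pi.single (⟨m.val+1, h⟩ : Fin e) 1) = -1 := by
  classical
  rw [wittAlpha_eq_coeff]
  rw [Finset.prod_eq_single (⟨m.val+1, h⟩ : Fin e)]
  · rw [Pi.single_eq_same, pow_one, shiftHom_wittHmod,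
      if_neg (show ¬(((⟨m.val+1, h⟩ : Fin e) : ℕ) < m.val) by simp),
      (show ((⟨m.val+1, h⟩ : Fin e) : ℕ) - m.val = 1 by simp)]
    exact coeff_wittHmod_one p
  · intro k _ hk
    rw [Pi.single_eq_of_ne hk, pow_zero, map_one]
  · intro hh
    exact absurd (Finset.mem_univ _) hh

end Classification

section CL3
variable (p : ℕ) [hp : Fact p.Prime]

lemma weight_muXY (n : ℕ) :
    (Finsupp.weight (fun v : Fin 2 × ℕ => p ^ v.2)) (muXY n 1) = n + 1 := by
  rw [muXY, map_add]
  have hs : ∀ (v : Fin 2 × ℕ) (c : ℕ),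
      (Finsupp.weight (fun v : Fin 2 × ℕ => p ^ v.2)) (Finsupp.single v c) = c * p ^ v.2 := by
    intro v c
    rw [Finsupp.weight_apply, Finsupp.sum_single_index]
    · rw [smul_eq_mul]
    · simp
  rw [hs, hs]
  simp

lemma wittAlpha_vanish (e : ℕ) (m : Fin e) (n : ℕ) (hnp : n + 1 ≤ p)
    (l : Fin e → ℕ) (hl1 : l ≠ Pi.single m (n+1))
    (hl2 : n + 1 = p → ∀ h : m.val + 1 < e, l ≠ Pi.single (⟨m.val+1, h⟩ : Fin e) 1) :
    wittAlpha p e (Pi.single m n) (Pi.single m 1) l = 0 := by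
  classical
  have hp2 : 2 ≤ p := hp.1.two_le
  rw [wittAlpha_eq_coeff]
  by_cases hlow : ∃ k : Fin e, (k : ℕ) < m.val ∧ l k ≠ 0
  · obtain ⟨k₀, hk₀, hk₀'⟩ := hlow
    have hz : (shiftHom p m.val) (wittHmod p (k₀ : ℕ) ^ l k₀) = 0 := by
      rw [map_pow, shiftHom_wittHmod, if_pos hk₀, zero_pow hk₀']
    rw [Finset.prod_eq_zero (Finset.mem_univ k₀) hz, MvPolynomial.coeff_zero]
  · push_neg at hlow
    have hWH : (∏ k : Fin e, (shiftHom p m.val) (wittHmod p (k : ℕ) ^ l k)).IsWeightedHomogeneous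
        (fun v : Fin 2 × ℕ => p ^ v.2) (∑ k : Fin e, l k * p ^ ((k : ℕ) - m.val)) := by
      apply MvPolynomial.IsWeightedHomogeneous.prod
      intro k _
      rw [map_pow, shiftHom_wittHmod]
      by_cases hk : (k : ℕ) < m.val
      · rw [if_pos hk, hlow k hk, pow_zero, Nat.zero_mul]
        exact isWeightedHomogeneous_one _ _
      · rw [if_neg hk]
        exact whPow (wh_wittHmod p ((k : ℕ) - m.val)) (l k)
    by_contra hne
    have hw := hWH hne
    rw [weight_muXY] at hw
    -- hw : n + 1 = ∑ k, l k * p ^ (k - m)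
    have hbound : ∀ k : Fin e, l k * p ^ ((k : ℕ) - m.val) ≤ n + 1 := by
      intro k
      rw [hw]
      exact Finset.single_le_sum (f := fun k : Fin e => l k * p ^ ((k : ℕ) - m.val))
        (fun i _ => Nat.zero_le _) (Finset.mem_univ k)
    have hfar : ∀ k : Fin e, m.val + 1 < (k : ℕ) → l k = 0 := by
      intro k hk
      by_contra h0
      have h1 : p ^ 2 ≤ p ^ ((k : ℕ) - m.val) := Nat.pow_le_pow_right (by omega) (by omega)
      have h2 : p ^ ((k : ℕ) - m.val) ≤ l k * p ^ ((k : ℕ) - m.val) :=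
        Nat.le_mul_of_pos_left _ (by omega)
      have h3 : 2 * p ≤ p ^ 2 := by
        rw [pow_two]
        exact Nat.mul_le_mul_right p hp2
      have h4 := hbound k
      have h5 : 2 * p ≤ n + 1 := le_trans h3 (le_trans h1 (le_trans h2 h4))
      omega
    have hm_eq : ∀ k : Fin e, (k : ℕ) = m.val → k = m := fun k hk => Fin.ext hk
    by_cases hm' : m.val + 1 < e
    · set m' : Fin e := ⟨m.val + 1, hm'⟩ with hm'def
      have hmm' : m ≠ m' := by
        intro hc
        have := congrArg Fin.val hc
        simp [hm'def] at this
      have hsum : ∑ k : Fin e, l k * p ^ ((k : ℕ) - m.val) = l m + l m' * p := by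
        rw [← Finset.sum_subset (Finset.subset_univ ({m, m'} : Finset (Fin e)))]
        · rw [Finset.sum_pair hmm']
          have e1 : (m : ℕ) - m.val = 0 := by omega
          have e2 : (m' : ℕ) - m.val = 1 := by simp [hm'def]
          rw [e1, e2, pow_zero, pow_one, Nat.mul_one]
        · intro k _ hk
          simp only [Finset.mem_insert, Finset.mem_singleton] at hk
          push_neg at hk
          rcases lt_trichotomy ((k : ℕ)) m.val with h | h | h
          · rw [hlow k h, Nat.zero_mul]
          · exact absurd (hm_eq k h) hk.1
          · rcases Nat.lt_or_ge (m.val + 1) (k : ℕ) with h' | h'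
            · rw [hfar k h', Nat.zero_mul]
            · have hkv : (k : ℕ) = m.val + 1 := by omega
              exact absurd (Fin.ext (show (k : ℕ) = ((⟨m.val+1, hm'⟩ : Fin e) : ℕ) from hkv)) hk.2
      rw [hsum] at hw
      rcases Nat.eq_zero_or_pos (l m') with h0 | h0
      · -- l = Pi.single m (n+1)
        rw [h0, Nat.zero_mul, Nat.add_zero] at hw
        apply hl1
        funext k
        rw [Pi.single_apply]
        by_cases hk : k = m
        · rw [if_pos hk, hk]
          omega
        · rw [if_neg hk]
          rcases lt_trichotomy ((k : ℕ)) m.val with h | h | h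
          · exact hlow k h
          · exact absurd (hm_eq k h) hk
          · rcases Nat.lt_or_ge (m.val + 1) (k : ℕ) with h' | h'
            · exact hfar k h'
            · have hkv : (k : ℕ) = m.val + 1 := by omega
              have hkm' : k = m' := Fin.ext (show (k : ℕ) = ((⟨m.val+1, hm'⟩ : Fin e) : ℕ) from hkv)
              rw [hkm']
              exact h0
      · -- n + 1 = p, l m' = 1, l m = 0
        have hple : p ≤ l m' * p := Nat.le_mul_of_pos_left _ h0
        have hnp' : n + 1 = p := by omega
        have h1 : l m' = 1 := by nlinarith
        have h2 : l m = 0 := by omega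
        apply hl2 hnp' hm'
        funext k
        rw [Pi.single_apply]
        by_cases hk : k = m'
        · rw [if_pos hk, hk]
          exact h1
        · rw [if_neg hk]
          rcases lt_trichotomy ((k : ℕ)) m.val with h | h | h
          · exact hlow k h
          · rw [hm_eq k h]
            exact h2
          · rcases Nat.lt_or_ge (m.val + 1) (k : ℕ) with h' | h'
            · exact hfar k h'
            · have hkv : (k : ℕ) = m.val + 1 := by omega
              exact absurd (Fin.ext (show (k : ℕ) = ((⟨m.val+1, hm'⟩ : Fin e) : ℕ) from hkv)) hk
    · -- no m'
      have hsum : ∑ k : Fin e, l k * p ^ ((k : ℕ) - m.val) = l m := by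
        rw [Finset.sum_eq_single m]
        · rw [Nat.sub_self, pow_zero, Nat.mul_one]
        · intro k _ hk
          rcases lt_trichotomy ((k : ℕ)) m.val with h | h | h
          · rw [hlow k h, Nat.zero_mul]
          · exact absurd (hm_eq k h) hk
          · have hout : m.val + 1 < (k : ℕ) := by
              have := k.isLt
              omega
            rw [hfar k hout, Nat.zero_mul]
        · intro h
          exact absurd (Finset.mem_univ m) h
      rw [hsum] at hw
      apply hl1
      funext k
      rw [Pi.single_apply]
      by_cases hk : k = m
      · rw [if_pos hk, hk]
        omega
      · rw [if_neg hk]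
        rcases lt_trichotomy ((k : ℕ)) m.val with h | h | h
        · exact hlow k h
        · exact absurd (hm_eq k h) hk
        · have hout : m.val + 1 < (k : ℕ) := by
            have := k.isLt
            omega
          exact hfar k hout

end CL3


/-- In a model of `W_e`-DCF, the kernel of `D_{𝐞_1}` equals `K^p`, the subfield of
`p`-th powers of `K`. -/
theorem WeDCF_ker_first_deriv (p e : ℕ) [Fact p.Prime] (he : 1 ≤ e)
    (K : Type*) [Field K] [CharP K p] (D : (Fin e → ℕ) → K → K)
    (hD : IsWeDCF p e K D) :
    {x : K | D (Pi.single (⟨0, he⟩ : Fin e) 1) x = 0} =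
      (RingHom.fieldRange (frobenius K p) : Set K) := by
  obtain ⟨-, -, -, hadd, -, hiter, hstrict⟩ := hD
  have hp2 : 2 ≤ p := (Fact.out : p.Prime).two_le
  have hDzero : ∀ i : Fin e → ℕ, D i 0 = 0 := by
    intro i
    have h := hadd i 0 0
    rw [add_zero] at h
    have h2 : D i 0 + D i 0 = D i 0 + 0 := by
      rw [add_zero]
      exact h.symm
    exact (add_left_cancel h2)
  have hcast : ∀ a : ZMod p, (ZMod.cast a : K) = (ZMod.castHom (dvd_refl p) K) a := by
    intro a
    rw [ZMod.castHom_apply]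
  ext x
  simp only [Set.mem_setOf_eq, SetLike.mem_coe]
  constructor
  · intro hx
    have key : ∀ j : ℕ, ∀ hj : j < e, D (Pi.single (⟨j, hj⟩ : Fin e) 1) x = 0 := by
      intro j
      induction j with
      | zero => intro hj; exact hx
      | succ j ih =>
        intro hj
        have hj' : j < e := by omega
        have hbase : D (Pi.single (⟨j, hj'⟩ : Fin e) 1) x = 0 := ih hj'
        set m : Fin e := ⟨j, hj'⟩ with hmdef
        have inner : ∀ t : ℕ, 1 ≤ t → t < p → D (Pi.single m t) x = 0 := by
          intro t
          induction t with
          | zero => intro h1 _; omega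
          | succ t iht =>
            intro _ h2
            rcases Nat.eq_zero_or_pos t with rfl | ht
            · exact hbase
            · have hDt : D (Pi.single m t) x = 0 := iht (by omega) (by omega)
              have hit := hiter (Pi.single m t) (Pi.single m 1) x
              rw [hbase, hDzero] at hit
              have hfin : (∑ᶠ l : Fin e → ℕ,
                  ZMod.cast (wittAlpha p e (Pi.single m t) (Pi.single m 1) l) * D l x)
                  = ZMod.cast (wittAlpha p e (Pi.single m t) (Pi.single m 1)
                      (Pi.single m (t+1))) * D (Pi.single m (t+1)) x := by
                apply finsum_eq_single
                intro l hl
                rw [wittAlpha_vanish p e m t (by omega) l hl (fun hq => absurd hq (by omega))]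
                rw [hcast, map_zero, zero_mul]
              rw [hfin, wittAlpha_single] at hit
              rw [hcast, map_natCast] at hit
              have hne : ((t + 1 : ℕ) : K) ≠ 0 := by
                rw [Ne, CharP.cast_eq_zero_iff K p]
                intro hdvd
                have := Nat.le_of_dvd (by omega) hdvd
                omega
              rcases mul_eq_zero.mp hit.symm with hc | hc
              · exact absurd hc hne
              · exact hc
        have hlast : D (Pi.single m (p-1)) x = 0 := inner (p-1) (by omega) (by omega)
        have hit := hiter (Pi.single m (p-1)) (Pi.single m 1) x
        rw [hbase, hDzero] at hit
        have hmval : m.val = j := rfl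
        have hj1 : m.val + 1 < e := by omega
        have hfin : (∑ᶠ l : Fin e → ℕ,
            ZMod.cast (wittAlpha p e (Pi.single m (p-1)) (Pi.single m 1) l) * D l x)
            = ZMod.cast (wittAlpha p e (Pi.single m (p-1)) (Pi.single m 1)
                (Pi.single (⟨m.val+1, hj1⟩ : Fin e) 1))
              * D (Pi.single (⟨m.val+1, hj1⟩ : Fin e) 1) x := by
          apply finsum_eq_single
          intro l hl
          by_cases hl1 : l = Pi.single m ((p-1)+1)
          · rw [hl1, wittAlpha_single, (show (p-1)+1 = p by omega), ZMod.natCast_self]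
            rw [hcast, map_zero, zero_mul]
          · rw [wittAlpha_vanish p e m (p-1) (by omega) l hl1 (fun _ _ => hl)]
            rw [hcast, map_zero, zero_mul]
        rw [hfin, wittAlpha_next p e m hj1] at hit
        rw [hcast, map_neg, map_one] at hit
        have : D (Pi.single (⟨m.val+1, hj1⟩ : Fin e) 1) x = 0 := by
          have h' := hit.symm
          rw [neg_mul, one_mul, neg_eq_zero] at h'
          exact h'
        exact this
    have hall : ∀ m : Fin e, D (Pi.single m 1) x = 0 := by
      intro m
      exact key m.val m.isLt
    obtain ⟨y, hy⟩ := (hstrict x).mp hall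
    exact RingHom.mem_fieldRange.mpr ⟨y, by rw [frobenius_def, hy]⟩
  · intro hx
    obtain ⟨y, hy⟩ := RingHom.mem_fieldRange.mp hx
    have : x = y ^ p := by rw [← hy, frobenius_def]
    exact (hstrict x).mpr ⟨y, this⟩ (⟨0, he⟩ : Fin e)
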